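/- arXiv:1506.04717 — 3 statements merged into one kernel-verified Lean document; each statement's English description precedes it below -/
import Mathlib

section
/- The Greenberg function depends only on the integral closure of the ideal: Let V be a Henselian discrete valuation ring with maximal ideal 𝔪_V, satisfying that Frac(V) → Frac(V̂) is separable if char(Frac(V)) > 0. Let f(y) ∈ V[y]^r and g(y) ∈ V[y]^q be vectors of polynomials in y = (y₁,…,y_m), generating ideals I and J of V[y] respectively, and let β_f and β_g denote their Greenberg functions. If the integral closures of I and J in V[y] coincide, then β_f = β_g. -/
/-!
# The Greenberg function depends only on the integral closure of the ideal
-/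

open IsLocalRing

universe u

/-- For a local domain `V` with fraction field `K = Frac V` and maximal-adic completion `V̂`
with fraction field `K̂ = Frac V̂`, the field extension `K → K̂` is separable if and only if
`K̂ ⊗[K] K' ≅ V̂ ⊗[V] K'` is reduced for every finite field extension `K'` of `K`. -/
def HasSeparableCompletionFraction (V : Type u) [CommRing V] [IsDomain V] [IsLocalRing V] :
    Prop :=
  ∀ (K' : Type u) [Field K'] [Algebra (FractionRing V) K']
    [FiniteDimensional (FractionRing V) K']
    [Algebra V K'] [IsScalarTower V (FractionRing V) K'],
    IsReduced (TensorProduct V (AdicCompletion (maximalIdeal V) V) K')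

/-- The Greenberg function of a vector `f` of polynomials over a local ring `V`: `β c` is the
least integer `N` such that every `ybar ∈ V ^ m` with `f (ybar) ≡ 0 mod 𝔪_V ^ N` is congruent
modulo `𝔪_V ^ c` to an exact solution of `f = 0`. -/
noncomputable def greenbergFunction {V : Type u} [CommRing V] [IsLocalRing V] {m r : ℕ}
    (f : Fin r → MvPolynomial (Fin m) V) (c : ℕ) : ℕ :=
  sInf {N : ℕ | ∀ ybar : Fin m → V,
    (∀ i, MvPolynomial.eval ybar (f i) ∈ maximalIdeal V ^ N) →
    ∃ ytil : Fin m → V,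
      (∀ i, MvPolynomial.eval ytil (f i) = 0) ∧
      (∀ j, ytil j - ybar j ∈ maximalIdeal V ^ c)}

/-- The integral closure of an ideal `I` of a commutative ring `R`: the set of `h ∈ R`
satisfying an equation `h ^ n + a_1 h ^ (n - 1) + ⋯ + a_n = 0` with `a_i ∈ I ^ i`. -/
def idealIntegralClosure {R : Type u} [CommRing R] (I : Ideal R) : Set R :=
  {h | ∃ n : ℕ, 0 < n ∧ ∃ a : ℕ → R, (∀ i ∈ Finset.Icc 1 n, a i ∈ I ^ i) ∧
    h ^ n + ∑ i ∈ Finset.Icc 1 n, a i * h ^ (n - i) = 0}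


section AuxGreenberg

/-- In a DVR, each power `𝔪^N` of the maximal ideal is integrally closed. -/
lemma dvr_pow_int_closed {V : Type*} [CommRing V] [IsDomain V] [IsDiscreteValuationRing V]
    (N : ℕ) (x : V) (n : ℕ) (hn : 0 < n) (b : ℕ → V)
    (hb : ∀ i ∈ Finset.Icc 1 n, b i ∈ (maximalIdeal V ^ N) ^ i)
    (heq : x ^ n + ∑ i ∈ Finset.Icc 1 n, b i * x ^ (n - i) = 0) :
    x ∈ maximalIdeal V ^ N := by
  rcases eq_or_ne x 0 with rfl | hx
  · exact Ideal.zero_mem _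
  obtain ⟨ϖ, hϖ⟩ := IsDiscreteValuationRing.exists_irreducible V
  obtain ⟨k, u, hxk⟩ := IsDiscreteValuationRing.eq_unit_mul_pow_irreducible hx hϖ
  have hmax : maximalIdeal V ^ N = Ideal.span {ϖ ^ N} := by
    rw [hϖ.maximalIdeal_eq, Ideal.span_singleton_pow]
  rcases le_or_gt N k with hNk | hkN
  · rw [hmax, Ideal.mem_span_singleton, hxk]
    exact Dvd.dvd.mul_left (pow_dvd_pow ϖ hNk) _
  · exfalso
    have hdvd : ∀ i ∈ Finset.Icc 1 n, ϖ ^ (k * n + 1) ∣ b i * x ^ (n - i) := by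
      intro i hi
      rw [Finset.mem_Icc] at hi
      have hb' : ϖ ^ (N * i) ∣ b i := by
        have := hb i (Finset.mem_Icc.mpr hi)
        rwa [hmax, Ideal.span_singleton_pow, Ideal.mem_span_singleton, ← pow_mul] at this
      have hx' : ϖ ^ (k * (n - i)) ∣ x ^ (n - i) := by
        rw [hxk, mul_pow, ← pow_mul]
        exact Dvd.dvd.mul_left dvd_rfl _
      have hle : k * n + 1 ≤ N * i + k * (n - i) := by
        obtain ⟨j, rfl⟩ := Nat.exists_eq_add_of_le hi.2
        have h1 : i + j - i = j := by omega
        rw [h1]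
        nlinarith [hi.1, hkN]
      calc ϖ ^ (k * n + 1) ∣ ϖ ^ (N * i + k * (n - i)) := pow_dvd_pow ϖ hle
        _ = ϖ ^ (N * i) * ϖ ^ (k * (n - i)) := pow_add ϖ _ _
        _ ∣ b i * x ^ (n - i) := mul_dvd_mul hb' hx'
    have hsum : ϖ ^ (k * n + 1) ∣ x ^ n := by
      rw [eq_neg_of_add_eq_zero_left heq]
      exact (Finset.dvd_sum hdvd).neg_right
    rw [hxk, mul_pow, ← pow_mul, mul_comm k n, pow_succ'] at hsum
    have : ϖ ∣ (u : V) ^ n := by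
      have hne : (ϖ : V) ^ (n * k) ≠ 0 := pow_ne_zero _ hϖ.ne_zero
      rw [mul_comm ((u : V) ^ n) _, mul_comm ϖ _] at hsum
      exact (mul_dvd_mul_iff_left hne).mp hsum
    exact hϖ.not_isUnit (isUnit_of_dvd_unit this (u.isUnit.pow n))

lemma subset_idealIntegralClosure {R : Type u} [CommRing R] (I : Ideal R) :
    (I : Set R) ⊆ idealIntegralClosure I := by
  intro h hh
  refine ⟨1, one_pos, fun _ => -h, ?_, ?_⟩
  · intro i hi
    simp only [Finset.Icc_self, Finset.mem_singleton] at hi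
    subst hi
    simpa using I.neg_mem hh
  · simp

lemma map_mem_pow_of_intClosure {R V : Type u} [CommRing R] [CommRing V] [IsDomain V]
    [IsDiscreteValuationRing V] (φ : R →+* V) {I : Ideal R} {h : R}
    (hh : h ∈ idealIntegralClosure I) {N : ℕ} (H : Ideal.map φ I ≤ maximalIdeal V ^ N) :
    φ h ∈ maximalIdeal V ^ N := by
  obtain ⟨n, hn, a, ha, heq⟩ := hh
  refine dvr_pow_int_closed N (φ h) n hn (fun i => φ (a i)) ?_ ?_
  · intro i hi
    have : φ (a i) ∈ Ideal.map φ (I ^ i) := Ideal.mem_map_of_mem φ (ha i hi)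
    rw [Ideal.map_pow] at this
    exact Ideal.pow_right_mono H _ this
  · have := congrArg φ heq
    simpa [map_add, map_pow, map_sum, map_mul] using this

lemma map_eq_zero_of_intClosure {R V : Type u} [CommRing R] [CommRing V] [IsDomain V]
    (φ : R →+* V) {I : Ideal R} {h : R}
    (hh : h ∈ idealIntegralClosure I) (H : ∀ x ∈ I, φ x = 0) :
    φ h = 0 := by
  obtain ⟨n, hn, a, ha, heq⟩ := hh
  have hz : ∀ i ∈ Finset.Icc 1 n, φ (a i) = 0 := by
    intro i hi
    rw [Finset.mem_Icc] at hi
    exact H _ (Ideal.pow_le_self (by omega) (ha i (Finset.mem_Icc.mpr hi)))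
  have := congrArg φ heq
  simp only [map_add, map_pow, map_sum, map_mul, map_zero] at this
  rw [Finset.sum_congr rfl (fun i hi => by rw [hz i hi, zero_mul])] at this
  simp only [Finset.sum_const_zero, add_zero] at this
  exact pow_eq_zero_iff hn.ne' |>.mp this

section Transfer
variable {V : Type u} [CommRing V] [IsDomain V] [IsDiscreteValuationRing V]
  {m r q : ℕ} (f : Fin r → MvPolynomial (Fin m) V) (g : Fin q → MvPolynomial (Fin m) V)

lemma cond_pow_transfer
    (hIJ : idealIntegralClosure (Ideal.span (Set.range f)) =
      idealIntegralClosure (Ideal.span (Set.range g)))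
    (y : Fin m → V) (N : ℕ) (hf : ∀ i, MvPolynomial.eval y (f i) ∈ maximalIdeal V ^ N) :
    ∀ j, MvPolynomial.eval y (g j) ∈ maximalIdeal V ^ N := by
  intro j
  have hg : g j ∈ idealIntegralClosure (Ideal.span (Set.range f)) := by
    rw [hIJ]
    exact subset_idealIntegralClosure _ (Ideal.subset_span ⟨j, rfl⟩)
  refine map_mem_pow_of_intClosure (MvPolynomial.eval y) hg ?_
  rw [Ideal.map_span, Ideal.span_le]
  rintro _ ⟨_, ⟨i, rfl⟩, rfl⟩
  exact hf i

omit [IsDiscreteValuationRing V] in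
lemma cond_zero_transfer
    (hIJ : idealIntegralClosure (Ideal.span (Set.range f)) =
      idealIntegralClosure (Ideal.span (Set.range g)))
    (y : Fin m → V) (hf : ∀ i, MvPolynomial.eval y (f i) = 0) :
    ∀ j, MvPolynomial.eval y (g j) = 0 := by
  intro j
  have hg : g j ∈ idealIntegralClosure (Ideal.span (Set.range f)) := by
    rw [hIJ]
    exact subset_idealIntegralClosure _ (Ideal.subset_span ⟨j, rfl⟩)
  refine map_eq_zero_of_intClosure (MvPolynomial.eval y) hg ?_
  intro x hx
  refine Submodule.span_induction ?_ ?_ ?_ ?_ hx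
  · rintro _ ⟨i, rfl⟩; exact hf i
  · simp
  · intro a b _ _ ha hb; simp [ha, hb]
  · intro a b _ hb; simp [hb]

end Transfer

end AuxGreenberg

/-- **The Greenberg function is an invariant of the integral closure of the ideal.**
Let `V` be a Henselian discrete valuation ring (with separable completion of the fraction
field in positive characteristic), and let `f`, `g` be two vectors of polynomials in
`y = (y_1, …, y_m)` over `V` generating ideals `I` and `J` of `V[y]`.  If `I` and `J` have
the same integral closure, then the Greenberg functions of `f` and `g` coincide. -/
theorem greenberg_function_eq_of_integralClosure_eq {V : Type u} [CommRing V] [IsDomain V]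
    [IsDiscreteValuationRing V] [HenselianLocalRing V]
    (hsep : ringChar (FractionRing V) ≠ 0 → HasSeparableCompletionFraction V)
    {m r q : ℕ} (f : Fin r → MvPolynomial (Fin m) V) (g : Fin q → MvPolynomial (Fin m) V)
    (hIJ : idealIntegralClosure (Ideal.span (Set.range f)) =
      idealIntegralClosure (Ideal.span (Set.range g))) :
    greenbergFunction f = greenbergFunction g := by
  funext c
  unfold greenbergFunction
  congr 1
  ext N
  simp only [Set.mem_setOf_eq]
  constructor
  · intro H ybar hy
    obtain ⟨yt, h1, h2⟩ := H ybar (cond_pow_transfer g f hIJ.symm ybar N hy)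
    exact ⟨yt, cond_zero_transfer f g hIJ yt h1, h2⟩
  · intro H ybar hy
    obtain ⟨yt, h1, h2⟩ := H ybar (cond_pow_transfer f g hIJ ybar N hy)
    exact ⟨yt, cond_zero_transfer g f hIJ.symm yt h1, h2⟩
end

section
/- Approximate solutions with separated variables yield exact formal solutions over ℂ: Let f(x,y) ∈ ℂ[x,y]^r with x = (x₁,…,xₙ), y = (y₁,…,y_m), and for each 1 ≤ i ≤ m let J_i be a subset of {1,…,n}. Assume that for every c ∈ ℕ there exist polynomials ȳ_i^{(c)} ∈ ℂ[x_j : j ∈ J_i] (1 ≤ i ≤ m) such that f_k(x, ȳ^{(c)}(x)) ∈ (x)^c for all 1 ≤ k ≤ r. Then there exist formal power series ỹ_i ∈ ℂ⟦x_j : j ∈ J_i⟧ (1 ≤ i ≤ m) such that f_k(x, ỹ(x)) = 0 for all 1 ≤ k ≤ r. -/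
/-!
# Approximate solutions with separated variables yield exact formal solutions over ℂ
-/

noncomputable section BDLDaux

open MvPolynomial

namespace BDLDaux

/-- Coefficients of low degree of elements of `(X)^c` vanish. -/
theorem coeff_eq_zero_of_mem_span_X_pow {σ : Type*} {R : Type*} [CommRing R] :
    ∀ (c : ℕ) (p : MvPolynomial σ R),
      p ∈ (Ideal.span (Set.range (MvPolynomial.X : σ → MvPolynomial σ R))) ^ c →
      ∀ β : σ →₀ ℕ, (β.sum fun _ k => k) < c → MvPolynomial.coeff β p = 0 := by
  classical
  intro c
  induction c with
  | zero => intro p _ β hβ; exact absurd hβ (Nat.not_lt_zero _)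
  | succ c ih =>
    intro p hp
    rw [pow_succ] at hp
    refine Submodule.mul_induction_on hp ?_ ?_
    · intro a ha b hb β hβ
      rw [MvPolynomial.coeff_mul]
      refine Finset.sum_eq_zero fun x hx => ?_
      rw [Finset.HasAntidiagonal.mem_antidiagonal] at hx
      by_cases h1 : (x.1.sum fun _ k => k) < c
      · rw [ih a ha x.1 h1, zero_mul]
      · have hsum : ((x.1.sum fun _ k => k) + (x.2.sum fun _ k => k)) = β.sum fun _ k => k := by
          rw [← Finsupp.sum_add_index' (fun _ => rfl) (fun _ _ _ => rfl), hx]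
        have h2 : (x.2.sum fun _ k => k) = 0 := by omega
        have hx2 : x.2 = 0 := by
          ext j
          rw [Finsupp.sum] at h2
          by_cases hmem : j ∈ x.2.support
          · simpa using Finset.sum_eq_zero_iff.mp h2 j hmem
          · simpa using Finsupp.notMem_support_iff.mp hmem
        have hb0 : MvPolynomial.coeff x.2 b = 0 := by
          have hle : Ideal.span (Set.range (MvPolynomial.X : σ → MvPolynomial σ R)) ≤
              RingHom.ker (MvPolynomial.constantCoeff : MvPolynomial σ R →+* R) := by
            rw [Ideal.span_le]
            rintro _ ⟨i, rfl⟩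
            simp [RingHom.mem_ker]
          have h3 := hle hb
          rw [RingHom.mem_ker] at h3
          rw [hx2]
          simpa [MvPolynomial.constantCoeff_eq] using h3
        rw [hb0, mul_zero]
    · intro x y hx hy β hβ
      rw [MvPolynomial.coeff_add, hx β hβ, hy β hβ, add_zero]

/-- Countable Nullstellensatz over ℂ: a proper ideal of a polynomial ring in countably
many variables over ℂ has a ℂ-point. -/
theorem exists_ringHom_to_complex {V : Type} [Countable V]
    (I : Ideal (MvPolynomial V ℂ)) (hI : I ≠ ⊤) :
    ∃ φ : MvPolynomial V ℂ →+* ℂ,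
      (∀ a : ℂ, φ (MvPolynomial.C a) = a) ∧ ∀ x ∈ I, φ x = 0 := by
  obtain ⟨M, hM, hIM⟩ := Ideal.exists_le_maximal I hI
  letI : Field (MvPolynomial V ℂ ⧸ M) := Ideal.Quotient.field M
  have hrank : Module.rank ℂ (MvPolynomial V ℂ ⧸ M) ≤ Cardinal.aleph0 := by
    have h1 : Module.rank ℂ (MvPolynomial V ℂ) ≤ Cardinal.aleph0 := by
      rw [← (MvPolynomial.basisMonomials V ℂ).mk_eq_rank'']
      exact Cardinal.mk_le_aleph0
    exact le_trans
      ((Ideal.Quotient.mkₐ ℂ M).toLinearMap.rank_le_of_surjective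
        (Ideal.Quotient.mkₐ_surjective ℂ M)) h1
  haveI : Algebra.IsIntegral ℂ (MvPolynomial V ℂ ⧸ M) := by
    refine ⟨fun x => ?_⟩
    by_contra hni
    have htr : Transcendental ℂ x := fun hax => hni hax.isIntegral
    have h2 := htr.linearIndependent_sub_inv.cardinal_le_rank
    rw [Cardinal.mk_complex] at h2
    exact absurd (h2.trans hrank) (not_le_of_gt Cardinal.aleph0_lt_continuum)
  have hsurj : Function.Surjective (algebraMap ℂ (MvPolynomial V ℂ ⧸ M)) :=
    IsAlgClosed.algebraMap_bijective_of_isIntegral.2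
  let e : ℂ ≃+* (MvPolynomial V ℂ ⧸ M) :=
    RingEquiv.ofBijective (algebraMap ℂ (MvPolynomial V ℂ ⧸ M))
      ⟨(algebraMap ℂ (MvPolynomial V ℂ ⧸ M)).injective, hsurj⟩
  refine ⟨(e.symm : (MvPolynomial V ℂ ⧸ M) →+* ℂ).comp (Ideal.Quotient.mk M), ?_, ?_⟩
  · intro a
    have h : (Ideal.Quotient.mk M) (MvPolynomial.C a) = e a := rfl
    show e.symm ((Ideal.Quotient.mk M) (MvPolynomial.C a)) = a
    rw [h, RingEquiv.symm_apply_apply]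
  · intro x hx
    show e.symm ((Ideal.Quotient.mk M) x) = 0
    rw [Ideal.Quotient.eq_zero_iff_mem.mpr (hIM hx), map_zero]

variable {n m r : ℕ}

/-- Index type for the unknown coefficients. -/
def Vt (J : Fin m → Set (Fin n)) : Type :=
  {p : Fin m × (Fin n →₀ ℕ) // (p.2.support : Set (Fin n)) ⊆ J p.1}

instance (J : Fin m → Set (Fin n)) : Countable (Vt J) := by
  unfold Vt; infer_instance

open Classical in
/-- The generic power series with separated variables. -/
def Ygen (J : Fin m → Set (Fin n)) (i : Fin m) :
    MvPowerSeries (Fin n) (MvPolynomial (Vt J) ℂ) := fun α =>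
  if h : (α.support : Set (Fin n)) ⊆ J i then MvPolynomial.X (⟨(i, α), h⟩ : Vt J) else 0

open Classical in
theorem coeff_Ygen (J : Fin m → Set (Fin n)) (i : Fin m) (α : Fin n →₀ ℕ) :
    MvPowerSeries.coeff α (Ygen J i) =
      if h : (α.support : Set (Fin n)) ⊆ J i then MvPolynomial.X (⟨(i, α), h⟩ : Vt J)
      else 0 :=
  rfl

/-- The generic substitution of `f`. -/
def Fgen (f : Fin r → MvPolynomial (Fin n ⊕ Fin m) ℂ) (J : Fin m → Set (Fin n)) (l : Fin r) :
    MvPowerSeries (Fin n) (MvPolynomial (Vt J) ℂ) :=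
  MvPolynomial.eval₂
    ((MvPowerSeries.C (σ := Fin n) (R := MvPolynomial (Vt J) ℂ)).comp MvPolynomial.C)
    (Sum.elim MvPowerSeries.X (Ygen J)) (f l)

/-- Naturality: mapping the generic substitution along a `ℂ`-point. -/
theorem map_Fgen (f : Fin r → MvPolynomial (Fin n ⊕ Fin m) ℂ) (J : Fin m → Set (Fin n))
    (ψ : MvPolynomial (Vt J) ℂ →+* ℂ) (hψ : ∀ a, ψ (MvPolynomial.C a) = a) (l : Fin r) :
    MvPowerSeries.map ψ (Fgen f J l) =
      MvPolynomial.eval₂ (MvPowerSeries.C (σ := Fin n) (R := ℂ))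
        (Sum.elim MvPowerSeries.X fun i => MvPowerSeries.map ψ (Ygen J i)) (f l) := by
  rw [Fgen, MvPolynomial.eval₂_comp_left (MvPowerSeries.map ψ)]
  have h1 : (MvPowerSeries.map ψ).comp
      ((MvPowerSeries.C (σ := Fin n) (R := MvPolynomial (Vt J) ℂ)).comp MvPolynomial.C)
      = MvPowerSeries.C (σ := Fin n) (R := ℂ) := by
    ext a
    simp [MvPowerSeries.map_C, hψ a]
  have h2 : (MvPowerSeries.map ψ) ∘ (Sum.elim MvPowerSeries.X (Ygen J))
      = Sum.elim MvPowerSeries.X fun i => MvPowerSeries.map ψ (Ygen J i) := by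
    funext s
    cases s with
    | inl j => simp [Function.comp, MvPowerSeries.map_X]
    | inr i => simp [Function.comp]
  rw [h1, h2]

/-- Coercion of a polynomial substitution to power series. -/
theorem coe_eval₂ (f : Fin r → MvPolynomial (Fin n ⊕ Fin m) ℂ)
    (ybar : Fin m → MvPolynomial (Fin n) ℂ) (l : Fin r) :
    ((MvPolynomial.eval₂ MvPolynomial.C (Sum.elim MvPolynomial.X ybar) (f l) :
        MvPolynomial (Fin n) ℂ) : MvPowerSeries (Fin n) ℂ) =
      MvPolynomial.eval₂ (MvPowerSeries.C (σ := Fin n) (R := ℂ))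
        (Sum.elim MvPowerSeries.X fun i =>
          ((ybar i : MvPolynomial (Fin n) ℂ) : MvPowerSeries (Fin n) ℂ)) (f l) := by
  have h0 : ((MvPolynomial.eval₂ MvPolynomial.C (Sum.elim MvPolynomial.X ybar) (f l) :
      MvPolynomial (Fin n) ℂ) : MvPowerSeries (Fin n) ℂ)
      = MvPolynomial.coeToMvPowerSeries.ringHom
          (MvPolynomial.eval₂ MvPolynomial.C (Sum.elim MvPolynomial.X ybar) (f l)) := rfl
  have key := MvPolynomial.eval₂_comp_left
    (MvPolynomial.coeToMvPowerSeries.ringHom (σ := Fin n) (R := ℂ))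
    (MvPolynomial.C : ℂ →+* MvPolynomial (Fin n) ℂ) (Sum.elim MvPolynomial.X ybar) (f l)
  refine h0.trans (key.trans ?_)
  have h1 : (MvPolynomial.coeToMvPowerSeries.ringHom).comp
      (MvPolynomial.C : ℂ →+* MvPolynomial (Fin n) ℂ) = MvPowerSeries.C (σ := Fin n) (R := ℂ) := by
    ext a
    simp [MvPolynomial.coeToMvPowerSeries.ringHom_apply, MvPolynomial.coe_C]
  have h2 : (MvPolynomial.coeToMvPowerSeries.ringHom) ∘ (Sum.elim MvPolynomial.X ybar)
      = Sum.elim MvPowerSeries.X fun i =>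
          ((ybar i : MvPolynomial (Fin n) ℂ) : MvPowerSeries (Fin n) ℂ) := by
    funext s
    cases s with
    | inl j =>
      simp [Function.comp, MvPolynomial.coeToMvPowerSeries.ringHom_apply, MvPolynomial.coe_X]
    | inr i => simp [Function.comp, MvPolynomial.coeToMvPowerSeries.ringHom_apply]
  rw [h1, h2]

end BDLDaux

end BDLDaux

/-- **Separated-variables approximation** (Becker–Denef–Lipshitz–van den Dries).
Let `f` be a vector of polynomials over `ℂ` in `x = (x_1, …, x_n)` and `y = (y_1, …, y_m)`,
and for each `i` let `J i ⊆ {1, …, n}`.  If for every `c` there are polynomials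
`ybar i ∈ ℂ[x_j : j ∈ J i]` with `f (x, ybar (x)) ≡ 0 mod (x) ^ c`, then there are formal
power series `ytil i ∈ ℂ⟦x_j : j ∈ J i⟧` with `f (x, ytil (x)) = 0`. -/
theorem formal_solutions_with_separated_variables {n m r : ℕ}
    (f : Fin r → MvPolynomial (Fin n ⊕ Fin m) ℂ)
    (J : Fin m → Set (Fin n))
    (happrox : ∀ c : ℕ, ∃ ybar : Fin m → MvPolynomial (Fin n) ℂ,
      (∀ i, ∀ α ∈ (ybar i).support, (α.support : Set (Fin n)) ⊆ J i) ∧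
      (∀ l, MvPolynomial.eval₂ MvPolynomial.C (Sum.elim MvPolynomial.X ybar) (f l) ∈
        (Ideal.span (Set.range (MvPolynomial.X : Fin n → MvPolynomial (Fin n) ℂ))) ^ c)) :
    ∃ ytil : Fin m → MvPowerSeries (Fin n) ℂ,
      (∀ i, ∀ α : Fin n →₀ ℕ, MvPowerSeries.coeff α (ytil i) ≠ 0 →
        (α.support : Set (Fin n)) ⊆ J i) ∧
      (∀ l, MvPolynomial.eval₂ (MvPowerSeries.C (σ := Fin n) (R := ℂ)) (Sum.elim MvPowerSeries.X ytil)
        (f l) = 0) := by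
  classical
  -- the ideal of coefficient equations
  set g : Fin r × (Fin n →₀ ℕ) → MvPolynomial (BDLDaux.Vt J) ℂ :=
    fun q => MvPowerSeries.coeff q.2 (BDLDaux.Fgen f J q.1) with hg
  -- Step 1: the ideal generated by the `g q` is proper.
  have hproper : Ideal.span (Set.range g) ≠ ⊤ := by
    intro htop
    have h1 : (1 : MvPolynomial (BDLDaux.Vt J) ℂ) ∈
        Submodule.span (MvPolynomial (BDLDaux.Vt J) ℂ) (Set.range g) := by
      rw [show Submodule.span (MvPolynomial (BDLDaux.Vt J) ℂ) (Set.range g)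
        = Ideal.span (Set.range g) from rfl, htop]
      exact Submodule.mem_top
    obtain ⟨cf, hcf⟩ := Finsupp.mem_span_range_iff_exists_finsupp.mp h1
    set N : ℕ := (cf.support.sup fun q => q.2.sum fun _ k => k) + 1 with hN
    obtain ⟨ybar, hsupp, hmem⟩ := happrox N
    -- the point given by the coefficients of `ybar`
    set ψ : MvPolynomial (BDLDaux.Vt J) ℂ →+* ℂ :=
      MvPolynomial.eval (fun v : BDLDaux.Vt J => MvPolynomial.coeff v.1.2 (ybar v.1.1)) with hψ
    have hψC : ∀ a : ℂ, ψ (MvPolynomial.C a) = a := fun a => MvPolynomial.eval_C _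
    have hψY : ∀ i, MvPowerSeries.map ψ (BDLDaux.Ygen J i)
        = ((ybar i : MvPolynomial (Fin n) ℂ) : MvPowerSeries (Fin n) ℂ) := by
      intro i
      ext β
      rw [MvPowerSeries.coeff_map, MvPolynomial.coeff_coe, BDLDaux.coeff_Ygen]
      by_cases h : (β.support : Set (Fin n)) ⊆ J i
      · rw [dif_pos h]
        exact MvPolynomial.eval_X _
      · rw [dif_neg h]; refine (map_zero ψ).trans ?_
        exact (MvPolynomial.notMem_support_iff.mp fun hmem' => h (hsupp i β hmem')).symm
    -- `ψ` kills every `g q` with `q` in the support of `cf`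
    have hψg : ∀ q ∈ cf.support, ψ (g q) = 0 := by
      intro q hq
      rw [hg]
      have h2 : ψ (MvPowerSeries.coeff q.2 (BDLDaux.Fgen f J q.1))
          = MvPowerSeries.coeff q.2 (MvPowerSeries.map ψ (BDLDaux.Fgen f J q.1)) := by
        rw [MvPowerSeries.coeff_map]
      rw [h2, BDLDaux.map_Fgen f J ψ hψC]
      have h3 : (Sum.elim MvPowerSeries.X fun i =>
          MvPowerSeries.map ψ (BDLDaux.Ygen J i))
          = Sum.elim MvPowerSeries.X fun i =>
              ((ybar i : MvPolynomial (Fin n) ℂ) : MvPowerSeries (Fin n) ℂ) := by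
        funext s
        cases s with
        | inl j => rfl
        | inr i => exact hψY i
      rw [h3, ← BDLDaux.coe_eval₂ f ybar, MvPolynomial.coeff_coe]
      refine BDLDaux.coeff_eq_zero_of_mem_span_X_pow N _ (hmem q.1) q.2 ?_
      have h4 : (q.2.sum fun _ k => k) ≤ cf.support.sup fun q => q.2.sum fun _ k => k :=
        Finset.le_sup (f := fun q => q.2.sum fun _ k => k) hq
      omega
    -- contradiction: `1 = 0` in `ℂ`
    have h5 : (1 : ℂ) = 0 := by
      have h6 := congrArg ψ hcf
      rw [map_one, map_finsuppSum] at h6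
      rw [← h6, Finsupp.sum]
      refine Finset.sum_eq_zero fun q hq => ?_
      rw [smul_eq_mul, map_mul, hψg q hq, mul_zero]
    exact one_ne_zero h5
  -- Step 2: get a ℂ-point of the quotient
  obtain ⟨φ, hφC, hφI⟩ := BDLDaux.exists_ringHom_to_complex (Ideal.span (Set.range g)) hproper
  have hφg : ∀ q, φ (g q) = 0 := fun q =>
    hφI _ (Ideal.subset_span (Set.mem_range_self q))
  refine ⟨fun i => MvPowerSeries.map φ (BDLDaux.Ygen J i), ?_, ?_⟩
  · intro i α hne
    by_contra h
    apply hne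
    rw [MvPowerSeries.coeff_map, BDLDaux.coeff_Ygen, dif_neg h]; exact map_zero φ
  · intro l
    have h7 := BDLDaux.map_Fgen f J φ hφC l
    rw [← h7]
    ext β
    rw [MvPowerSeries.coeff_map, map_zero]
    exact hφg (l, β)
end

section
/- Linear equations have an Artin function bounded by c + c₀ (Artin–Rees): Let A be a Noetherian ring, I an ideal of A, and f(y) ∈ A[y]^r a vector of homogeneous linear forms in y = (y₁,…,y_m) (i.e. each f_k(y) = Σ_{i=1}^m a_{k,i} y_i with a_{k,i} ∈ A). Then there exists an integer c₀ ≥ 0 such that: for every c ∈ ℕ and every ȳ ∈ A^m with f_k(ȳ) ∈ I^{c+c₀} for all 1 ≤ k ≤ r, there exists ỹ ∈ A^m with f_k(ỹ) = 0 for all k and ỹ_i − ȳ_i ∈ I^c for all 1 ≤ i ≤ m. -/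
lemma mem_smul_top_pi_iff {A : Type*} [CommRing A] (J : Ideal A) {n : ℕ}
    (x : Fin n → A) : x ∈ J • (⊤ : Submodule A (Fin n → A)) ↔ ∀ i, x i ∈ J := by
  constructor
  · intro hx
    refine Submodule.smul_induction_on hx ?_ ?_
    · intro r hr m _ i
      exact J.mul_mem_right _ hr
    · intro y z hy hz i
      exact J.add_mem (hy i) (hz i)
  · intro hx
    have : x = ∑ i, (x i) • (Pi.single i (1 : A) : Fin n → A) := by
      funext j
      simp [Finset.sum_apply, Pi.single_apply, Finset.sum_ite_eq']
    rw [this]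
    exact Submodule.sum_mem _ fun i _ =>
      Submodule.smul_mem_smul (hx i) Submodule.mem_top

/-- **Artin approximation for homogeneous linear equations** (via the Artin–Rees lemma).
Let `A` be a Noetherian ring, `I` an ideal of `A`, and `f_k (y) = ∑ i, a k i * y i`
(`1 ≤ k ≤ r`) a vector of homogeneous linear forms in `y = (y_1, …, y_m)` over `A`.  Then
there is `c₀ ≥ 0` such that for all `c`, every `ybar` with `f_k (ybar) ∈ I ^ (c + c₀)` for
all `k` is congruent modulo `I ^ c` to an exact solution of the linear system. -/
theorem artin_function_linear {A : Type*} [CommRing A] [IsNoetherianRing A] (I : Ideal A)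
    {m r : ℕ} (a : Fin r → Fin m → A) :
    ∃ c₀ : ℕ, ∀ c : ℕ, ∀ ybar : Fin m → A,
      (∀ k, ∑ i, a k i * ybar i ∈ I ^ (c + c₀)) →
      ∃ ytil : Fin m → A,
        (∀ k, ∑ i, a k i * ytil i = 0) ∧
        (∀ i, ytil i - ybar i ∈ I ^ c) := by
  -- the linear map φ : A^m → A^r
  let φ : (Fin m → A) →ₗ[A] (Fin r → A) :=
    { toFun := fun y k => ∑ i, a k i * y i
      map_add' := by
        intro y z; funext k
        simp [mul_add, Finset.sum_add_distrib]
      map_smul' := by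
        intro s y; funext k
        simp [Finset.mul_sum, mul_left_comm] }
  obtain ⟨c₀, hc₀⟩ := Ideal.exists_pow_inf_eq_pow_smul I (LinearMap.range φ)
  refine ⟨c₀, fun c ybar hy => ?_⟩
  have h1 : φ ybar ∈ I ^ (c + c₀) • (⊤ : Submodule A (Fin r → A)) ⊓ LinearMap.range φ := by
    constructor
    · exact (mem_smul_top_pi_iff _ _).mpr hy
    · exact ⟨ybar, rfl⟩
  rw [hc₀ (c + c₀) (by omega)] at h1
  have h2 : φ ybar ∈ I ^ c • LinearMap.range φ := by
    have : c + c₀ - c₀ = c := by omega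
    rw [this] at h1
    exact Set.mem_of_mem_of_subset h1 (smul_mono_right (I ^ c) (inf_le_right : _ ⊓ LinearMap.range φ ≤ _))

  rw [← Submodule.map_top (f := φ), ← Submodule.map_smul'' ] at h2
  obtain ⟨z, hz, hze⟩ := h2
  refine ⟨ybar - z, fun k => ?_, fun i => ?_⟩
  · have : φ (ybar - z) = 0 := by rw [map_sub, hze, sub_self]
    exact congrFun this k
  · have hz' : ∀ i, z i ∈ I ^ c := (mem_smul_top_pi_iff _ _).mp hz
    simpa using (I ^ c).neg_mem (hz' i)
end
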